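/- For every integer n ≥ 2, ∑_{k=0}^{⌊n/2⌋} (1/2)^k (1/k!) ∑_{l=0}^{⌊n/2⌋-k} (-1)^l (1/2)^l (1/l!) · n_[2l+2k]/(n-1)^{2l+2k} = 1; i.e., the probabilities P(C̃₂*(n) = k) given by formula (c2n*law) sum to 1 over k = 0,…,⌊n/2⌋. -/

import Mathlib

open Finset

lemma tri_sum (N : ℕ) (f : ℕ → ℕ → ℝ) :
    ∑ k ∈ Finset.range (N + 1), ∑ l ∈ Finset.range (N - k + 1), f k l
      = ∑ m ∈ Finset.range (N + 1), ∑ k ∈ Finset.range (m + 1), f k (m - k) := by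
  rw [Finset.sum_sigma', Finset.sum_sigma']
  apply Finset.sum_nbij' (fun p => (⟨p.1 + p.2, p.1⟩ : Σ _ : ℕ, ℕ))
    (fun p => (⟨p.2, p.1 - p.2⟩ : Σ _ : ℕ, ℕ))
  · rintro ⟨k, l⟩ h
    simp only [Finset.mem_sigma, Finset.mem_range] at h ⊢
    omega
  · rintro ⟨m, k⟩ h
    simp only [Finset.mem_sigma, Finset.mem_range] at h ⊢
    omega
  · rintro ⟨k, l⟩ h
    simp only [Finset.mem_sigma, Finset.mem_range] at h
    simp
  · rintro ⟨m, k⟩ h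
    simp only [Finset.mem_sigma, Finset.mem_range] at h
    simp; omega
  · rintro ⟨k, l⟩ h
    simp only [Finset.mem_sigma, Finset.mem_range] at h
    simp

lemma alt_real (m : ℕ) :
    ∑ k ∈ Finset.range (m + 1), (-1 : ℝ) ^ (m - k) * (m.choose k : ℝ)
      = if m = 0 then 1 else 0 := by
  have := Int.alternating_sum_range_choose (n := m)
  have h2 : ∑ k ∈ Finset.range (m + 1), (-1 : ℝ) ^ k * (m.choose k : ℝ)
      = if m = 0 then 1 else 0 := by
    have := congrArg (fun z : ℤ => (z : ℝ)) this
    push_cast at this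
    convert this using 2 <;> simp
  rw [← h2, ← Finset.sum_range_reflect]
  apply Finset.sum_congr rfl
  intro k hk
  simp only [Finset.mem_range] at hk
  have h1 : m + 1 - 1 - k = m - k := by omega
  have h2 : m - (m - k) = k := by omega
  rw [h1, Nat.choose_symm (by omega : k ≤ m), h2]

theorem stmt_9 (n : ℕ) (hn : 2 ≤ n) :
    ∑ k ∈ Finset.range (n / 2 + 1),
        (1 / 2 : ℝ) ^ k * (1 / (k.factorial : ℝ)) *
          ∑ l ∈ Finset.range (n / 2 - k + 1),
            (-1 : ℝ) ^ l * (1 / 2 : ℝ) ^ l * (1 / (l.factorial : ℝ)) *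
              ((n.descFactorial (2 * l + 2 * k) : ℝ) / ((n : ℝ) - 1) ^ (2 * l + 2 * k))
    = 1 := by
  simp_rw [Finset.mul_sum]
  rw [tri_sum (n / 2) (fun k l => (1 / 2 : ℝ) ^ k * (1 / (k.factorial : ℝ)) *
      ((-1 : ℝ) ^ l * (1 / 2 : ℝ) ^ l * (1 / (l.factorial : ℝ)) *
        ((n.descFactorial (2 * l + 2 * k) : ℝ) / ((n : ℝ) - 1) ^ (2 * l + 2 * k))))]
  have key : ∀ m ∈ Finset.range (n / 2 + 1),
      (∑ k ∈ Finset.range (m + 1), (1 / 2 : ℝ) ^ k * (1 / (k.factorial : ℝ)) *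
        ((-1 : ℝ) ^ (m - k) * (1 / 2 : ℝ) ^ (m - k) * (1 / ((m - k).factorial : ℝ)) *
          ((n.descFactorial (2 * (m - k) + 2 * k) : ℝ) / ((n : ℝ) - 1) ^ (2 * (m - k) + 2 * k))))
      = if m = 0 then 1 else 0 := by
    intro m _
    have hexp : ∀ k ∈ Finset.range (m + 1), 2 * (m - k) + 2 * k = 2 * m := by
      intro k hk; simp only [Finset.mem_range] at hk; omega
    have : (∑ k ∈ Finset.range (m + 1), (1 / 2 : ℝ) ^ k * (1 / (k.factorial : ℝ)) *
        ((-1 : ℝ) ^ (m - k) * (1 / 2 : ℝ) ^ (m - k) * (1 / ((m - k).factorial : ℝ)) *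
          ((n.descFactorial (2 * (m - k) + 2 * k) : ℝ) / ((n : ℝ) - 1) ^ (2 * (m - k) + 2 * k))))
        = ((1 / 2 : ℝ) ^ m * (1 / (m.factorial : ℝ)) *
            ((n.descFactorial (2 * m) : ℝ) / ((n : ℝ) - 1) ^ (2 * m))) *
          ∑ k ∈ Finset.range (m + 1), (-1 : ℝ) ^ (m - k) * (m.choose k : ℝ) := by
      rw [Finset.mul_sum]
      apply Finset.sum_congr rfl
      intro k hk
      rw [hexp k hk]
      simp only [Finset.mem_range] at hk
      have hkm : k ≤ m := by omega
      have h1 : (k.factorial : ℝ) ≠ 0 := by positivity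
      have h2 : ((m - k).factorial : ℝ) ≠ 0 := by positivity
      have h3 : (m.factorial : ℝ) ≠ 0 := by positivity
      have hpow : (1 / 2 : ℝ) ^ k * (1 / 2 : ℝ) ^ (m - k) = (1 / 2 : ℝ) ^ m := by
        rw [← pow_add]; congr 1; omega
      have hc2 : (1 / (k.factorial : ℝ)) * (1 / ((m - k).factorial : ℝ))
          = (m.choose k : ℝ) * (1 / (m.factorial : ℝ)) := by
        rw [div_mul_div_comm, one_mul, mul_one_div, div_eq_div_iff (by positivity) h3]
        norm_cast
        rw [← Nat.choose_mul_factorial_mul_factorial hkm]; ring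
      linear_combination ((1 / (m.factorial : ℝ)) *
          ((n.descFactorial (2 * m) : ℝ) / ((n : ℝ) - 1) ^ (2 * m)) *
          (-1 : ℝ) ^ (m - k) * (m.choose k : ℝ)) * hpow +
        ((1 / 2 : ℝ) ^ k * (1 / 2 : ℝ) ^ (m - k) * (-1 : ℝ) ^ (m - k) *
          ((n.descFactorial (2 * m) : ℝ) / ((n : ℝ) - 1) ^ (2 * m))) * hc2
    rw [this, alt_real]
    split
    · subst ‹m = 0›; simp
    · ring
  rw [Finset.sum_congr rfl key]
  simp
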